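/- Let m ≥ 1 and let H_m = Σ_{i=1}^m 1/i be the m-th harmonic number. In the unique expansion ((x−1)^{\underline{m}})^3 = a_{3,0,m}(x−1)^{\underline{m}} + Σ_{l,r} a_{3,l,r}((x)^{\underline{m+1}})^l(x+r−m−1)^{\underline{r}}, one has a_{3,1,m−1} = (−1)^m·m! and a_{3,1,m} = (−1)^{m−1}·m!·H_m. -/

import Mathlib

open Polynomial

section Helpers
open Finset

lemma altsum (n : ℕ) : ∑ i ∈ range (n+1), (-1:ℝ)^i * (n.choose i) = if n = 0 then 1 else 0 := by
  have h := Int.alternating_sum_range_choose (n := n)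
  have h2 : ((∑ m ∈ range (n + 1), ((-1) ^ m * n.choose m : ℤ) : ℤ) : ℝ)
      = ∑ i ∈ range (n+1), (-1:ℝ)^i * (n.choose i) := by
    push_cast; rfl
  rw [← h2, h]; split <;> simp

lemma binom_inv (N : ℕ) (b f : ℕ → ℝ)
    (h : ∀ n, n ≤ N → ∑ r ∈ range (n+1), (n.choose r : ℝ) * b r = f n) :
    b N = ∑ n ∈ range (N+1), (-1:ℝ)^(N-n) * (N.choose n) * f n := by
  have hinner : ∀ r, r ≤ N →
      ∑ n ∈ range (N+1), (-1:ℝ)^(N-n) * (N.choose n) * (n.choose r)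
        = if r = N then 1 else 0 := by
    intro r hr
    have h1 : ∑ n ∈ range (N+1), (-1:ℝ)^(N-n) * (N.choose n) * (n.choose r)
        = ∑ n ∈ Ico r (N+1), (-1:ℝ)^(N-n) * (N.choose n) * (n.choose r) := by
      refine (Finset.sum_subset ?_ ?_).symm
      · intro x hx; simp at hx ⊢; omega
      · intro x hx hx2
        simp only [mem_range] at hx
        simp only [mem_Ico, not_and, not_lt] at hx2
        have : x < r := by omega
        rw [Nat.choose_eq_zero_of_lt this]; simp
    rw [h1, Finset.sum_Ico_eq_sum_range]
    have h2 : ∀ t ∈ range (N + 1 - r), (-1:ℝ)^(N-(r+t)) * (N.choose (r+t)) * ((r+t).choose r)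
        = (-1:ℝ)^(N-r) * (N.choose r) * ((-1:ℝ)^t * ((N-r).choose t)) := by
      intro t ht
      simp only [mem_range] at ht
      have hle : r + t ≤ N := by omega
      have hc : (N.choose (r+t)) * ((r+t).choose r) = (N.choose r) * ((N-r).choose (r+t-r)) :=
        Nat.choose_mul (Nat.le_add_right r t)
      rw [Nat.add_sub_cancel_left] at hc
      have hsign : (-1:ℝ)^(N-(r+t)) = (-1:ℝ)^(N-r) * (-1:ℝ)^t := by
        have : N - (r+t) + t = N - r := by omega
        calc (-1:ℝ)^(N-(r+t)) = (-1:ℝ)^(N-(r+t)) * ((-1:ℝ)^t * (-1:ℝ)^t) := by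
              rw [← pow_add, ← two_mul, pow_mul]; norm_num
        _ = ((-1:ℝ)^(N-(r+t)) * (-1:ℝ)^t) * (-1:ℝ)^t := by ring
        _ = (-1:ℝ)^(N-r) * (-1:ℝ)^t := by rw [← pow_add, this]
      rw [hsign]
      have hc' : ((N.choose (r+t)) : ℝ) * ((r+t).choose r) = (N.choose r) * ((N-r).choose t) := by
        exact_mod_cast congrArg (Nat.cast (R := ℝ)) hc
      calc (-1:ℝ)^(N-r) * (-1:ℝ)^t * (N.choose (r+t)) * ((r+t).choose r)
          = (-1:ℝ)^(N-r) * (-1:ℝ)^t * ((N.choose (r+t)) * ((r+t).choose r)) := by ring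
      _ = (-1:ℝ)^(N-r) * (-1:ℝ)^t * ((N.choose r) * ((N-r).choose t)) := by rw [hc']
      _ = (-1:ℝ)^(N-r) * (N.choose r) * ((-1:ℝ)^t * ((N-r).choose t)) := by ring
    rw [Finset.sum_congr rfl h2, ← Finset.mul_sum]
    have hNr : N + 1 - r = (N - r) + 1 := by omega
    rw [hNr, altsum (N - r)]
    by_cases hrN : r = N
    · subst hrN; simp
    · rw [if_neg (by omega), if_neg hrN]; ring
  -- main computation
  have hrw : ∀ n ∈ range (N+1), (-1:ℝ)^(N-n) * (N.choose n) * f n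
      = ∑ r ∈ range (N+1), (-1:ℝ)^(N-n) * (N.choose n) * ((n.choose r : ℝ) * b r) := by
    intro n hn
    simp only [mem_range] at hn
    rw [← Finset.mul_sum]
    have hext : ∑ r ∈ range (n+1), (n.choose r : ℝ) * b r
        = ∑ r ∈ range (N+1), (n.choose r : ℝ) * b r := by
      refine Finset.sum_subset ?_ ?_
      · intro x hx; simp at hx ⊢; omega
      · intro x hx hx2
        simp only [mem_range] at hx hx2
        rw [Nat.choose_eq_zero_of_lt (by omega)]; simp
    rw [← hext, h n (by omega)]
  rw [Finset.sum_congr rfl hrw, Finset.sum_comm]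
  have : ∀ r ∈ range (N+1), ∑ n ∈ range (N+1), (-1:ℝ)^(N-n) * (N.choose n) * ((n.choose r : ℝ) * b r)
      = (if r = N then 1 else 0) * b r := by
    intro r hr
    simp only [mem_range] at hr
    rw [← hinner r (by omega), Finset.sum_mul]
    exact Finset.sum_congr rfl fun n _ => by ring
  rw [Finset.sum_congr rfl this]
  simp

lemma altsum_tail (n : ℕ) (hn : 1 ≤ n) :
    ∑ j ∈ range n, (-1:ℝ)^j * (n.choose (j+1)) = 1 := by
  have h := altsum n
  rw [Finset.sum_range_succ', if_neg (by omega)] at h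
  simp only [Nat.choose_zero_right, Nat.cast_one, mul_one, pow_zero] at h
  have h2 : ∑ j ∈ range n, (-1:ℝ)^(j+1) * (n.choose (j+1)) = -∑ j ∈ range n, (-1:ℝ)^j * (n.choose (j+1)) := by
    rw [← Finset.sum_neg_distrib]
    exact Finset.sum_congr rfl fun j _ => by ring
  rw [h2] at h; linarith

-- I2 : ∑_{j=0}^{m-1} (-1)^j C(m-1,j)/(j+1) = 1/m  (m ≥ 1)
lemma I2 (m : ℕ) (hm : 1 ≤ m) :
    ∑ j ∈ range m, (-1:ℝ)^j * ((m-1).choose j) / (j+1) = 1/m := by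
  have hm0 : (m:ℝ) ≠ 0 := by positivity
  have key : ∀ j : ℕ, (m:ℝ) * ((m-1).choose j) = (m.choose (j+1)) * (j+1) := by
    intro j
    have h := Nat.add_one_mul_choose_eq (m-1) j
    have h1 : m-1+1 = m := by omega
    rw [h1] at h
    exact_mod_cast congrArg (Nat.cast (R := ℝ)) h
  have hmain : (m:ℝ) * ∑ j ∈ range m, (-1:ℝ)^j * ((m-1).choose j) / (j+1)
      = ∑ j ∈ range m, (-1:ℝ)^j * (m.choose (j+1)) := by
    rw [Finset.mul_sum]
    refine Finset.sum_congr rfl fun j _ => ?_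
    have hj : ((j:ℝ)+1) ≠ 0 := by positivity
    rw [mul_div_assoc'] at *
    rw [div_eq_iff hj]
    calc (m:ℝ) * ((-1)^j * ((m-1).choose j)) = (-1:ℝ)^j * ((m:ℝ) * ((m-1).choose j)) := by ring
    _ = (-1:ℝ)^j * ((m.choose (j+1)) * (j+1)) := by rw [key j]
    _ = (-1:ℝ)^j * (m.choose (j+1)) * (j+1) := by ring
  rw [eq_div_iff hm0, mul_comm, hmain, altsum_tail m hm]

-- I1 : ∑_{j=0}^{m-1} (-1)^j C(m,j+1)/(j+1) = H_m
lemma I1 (m : ℕ) :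
    ∑ j ∈ range m, (-1:ℝ)^j * (m.choose (j+1)) / (j+1) = ∑ i ∈ range m, (1:ℝ)/(i+1) := by
  induction m with
  | zero => simp
  | succ n ih =>
    rw [Finset.sum_range_succ (f := fun i => (1:ℝ)/(i+1)), ← ih]
    rw [Finset.sum_range_succ]
    have hsplit : ∀ j ∈ range n, (-1:ℝ)^j * ((n+1).choose (j+1)) / (j+1)
        = (-1:ℝ)^j * (n.choose (j+1)) / (j+1) + (-1:ℝ)^j * (n.choose j) / (j+1) := by
      intro j _
      rw [Nat.choose_succ_succ' n j]
      push_cast; ring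
    rw [Finset.sum_congr rfl hsplit, Finset.sum_add_distrib]
    have hlast : (-1:ℝ)^n * ((n+1).choose (n+1)) / (n+1) = (-1:ℝ)^n * (n.choose n) / (n+1) := by
      simp
    rw [hlast]
    have hI2 := I2 (n+1) (by omega)
    simp only [Nat.add_sub_cancel] at hI2
    have : ∑ j ∈ range n, (-1:ℝ)^j * (n.choose j) / (j+1) + (-1:ℝ)^n * (n.choose n) / (n+1)
        = 1/(n+1) := by
      rw [← Finset.sum_range_succ (f := fun j => (-1:ℝ)^j * (n.choose j) / (j+1))]
      rw [hI2]; push_cast; ring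
    push_cast at *
    linarith

lemma prodA (a : ℕ) : ∀ b : ℕ, a.factorial * ∏ j ∈ range b, (a+1+j) = (a+b).factorial := by
  intro b
  induction b with
  | zero => simp
  | succ b ih =>
    rw [Finset.prod_range_succ, ← mul_assoc, ih]
    have : a + (b+1) = (a + b) + 1 := by omega
    rw [this, Nat.factorial_succ]
    ring

lemma prod_fact (s : ℕ) : ∏ x ∈ range s, ((x:ℝ)+1) = s.factorial := by
  calc ∏ x ∈ range s, ((x:ℝ)+1) = ((∏ x ∈ range s, (x+1) : ℕ) : ℝ) := by push_cast; rfl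
  _ = s.factorial := by rw [Finset.prod_range_add_one_eq_factorial]

lemma prodP2 (s : ℕ) : ∏ j ∈ range s, (-(1:ℝ)-j) = (-1:ℝ)^s * s.factorial := by
  have h1 : ∀ j ∈ range s, (-(1:ℝ)-j) = (-1) * ((j:ℝ)+1) := fun j _ => by ring
  rw [Finset.prod_congr rfl h1, Finset.prod_mul_distrib, Finset.prod_const, prod_fact]
  simp

lemma prodP1 (k : ℕ) : ∏ j ∈ range k, ((k:ℝ) - j) = k.factorial := by
  have h := Finset.prod_range_reflect (fun j => ((j:ℝ)+1)) k
  have h2 : ∀ j ∈ range k, ((k - 1 - j : ℕ):ℝ) + 1 = (k:ℝ) - j := by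
    intro j hj
    simp only [mem_range] at hj
    have h3 : (k - 1 - j : ℕ) = k - (j+1) := by omega
    rw [h3, Nat.cast_sub (by omega)]
    push_cast; ring
  rw [Finset.prod_congr rfl h2] at h
  rw [h, prod_fact]

lemma prodP3 (s k : ℕ) (hk : k < s) :
    ∏ j ∈ (range s).erase k, ((k:ℝ) - j) = (-1:ℝ)^(s-1-k) * k.factorial * (s-1-k).factorial := by
  have hset : (range s).erase k = range k ∪ Ico (k+1) s := by
    ext x; simp [mem_erase, mem_range, mem_union, mem_Ico]; omega
  have hdisj : Disjoint (range k) (Ico (k+1) s) := by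
    rw [Finset.disjoint_left]; intro x hx hx2; simp [mem_range, mem_Ico] at hx hx2; omega
  rw [hset, Finset.prod_union hdisj, prodP1]
  rw [Finset.prod_Ico_eq_prod_range]
  have h2 : ∀ i ∈ range (s - (k+1)), ((k:ℝ) - ((k+1+i:ℕ):ℝ)) = -(1:ℝ) - i := by
    intro i _; push_cast; ring
  rw [Finset.prod_congr rfl h2, prodP2]
  have h3 : s - (k+1) = s - 1 - k := by omega
  rw [h3]; ring

lemma prodP4 (r n : ℕ) :
    ∏ j ∈ range r, ((r:ℝ) - n - 1 - j) = (-1:ℝ)^r * r.factorial * (n.choose r) := by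
  by_cases h : r ≤ n
  · have h1 : ∀ j ∈ range r, ((r:ℝ) - n - 1 - j) = (-1) * (((n-r+1+j:ℕ)):ℝ) := by
      intro j hj
      push_cast [Nat.cast_sub h]; ring
    rw [Finset.prod_congr rfl h1, Finset.prod_mul_distrib, Finset.prod_const, card_range,
      ← Nat.cast_prod]
    have hN : (∏ j ∈ range r, (n-r+1+j)) = r.factorial * (n.choose r) := by
      have hA := prodA (n-r) r
      have h5 : n - r + r = n := by omega
      rw [h5] at hA
      have hC := Nat.choose_mul_factorial_mul_factorial h
      apply Nat.eq_of_mul_eq_mul_right (Nat.factorial_pos (n-r))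
      calc (∏ j ∈ range r, (n-r+1+j)) * (n-r).factorial
          = (n-r).factorial * ∏ j ∈ range r, (n-r+1+j) := by ring
        _ = n.factorial := hA
        _ = n.choose r * r.factorial * (n-r).factorial := hC.symm
        _ = r.factorial * n.choose r * (n-r).factorial := by ring
    rw [hN]; push_cast; ring
  · rw [Nat.choose_eq_zero_of_lt (by omega), Finset.prod_eq_zero (mem_range.2 (show r-n-1 < r by omega))]
    · simp
    · have hc : ((r - n - 1 : ℕ) : ℝ) = (r:ℝ) - n - 1 := by
        have : (r - n - 1 : ℕ) = r - (n+1) := by omega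
        rw [this, Nat.cast_sub (by omega)]; push_cast; ring
      rw [hc]; ring

lemma derivative_finset_prod {ι : Type*} [DecidableEq ι] (s : Finset ι) (f : ι → Polynomial ℝ) :
    derivative (∏ i ∈ s, f i) = ∑ i ∈ s, (∏ j ∈ s.erase i, f j) * derivative (f i) := by
  induction s using Finset.induction_on with
  | empty => simp
  | @insert a s' ha ih =>
    have hterm : ∀ i ∈ s', (∏ j ∈ (insert a s').erase i, f j) * derivative (f i)
        = f a * ((∏ j ∈ s'.erase i, f j) * derivative (f i)) := by
      intro i hi
      have hia : a ≠ i := fun h => ha (h ▸ hi)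
      rw [Finset.erase_insert_of_ne hia,
        Finset.prod_insert (fun h => ha (Finset.mem_of_mem_erase h)), mul_assoc]
    rw [Finset.prod_insert ha, derivative_mul, ih, Finset.sum_insert ha,
      Finset.erase_insert ha, Finset.sum_congr rfl hterm, ← Finset.mul_sum]
    ring

lemma eval_derivative_prod_root {ι : Type*} [DecidableEq ι] (s : Finset ι) (f : ι → Polynomial ℝ)
    {i0 : ι} (hi0 : i0 ∈ s) (t : ℝ) (h0 : eval t (f i0) = 0) :
    eval t (derivative (∏ i ∈ s, f i)) =
      eval t (derivative (f i0)) * ∏ j ∈ s.erase i0, eval t (f j) := by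
  rw [← Finset.prod_erase_mul s f hi0, derivative_mul]
  simp [h0, eval_prod, mul_comm]

end Helpers


/-- The falling factorial `(p)^{\underline{s}} = p (p-1) ⋯ (p-s+1)` of a polynomial `p`. -/
noncomputable def ffall (p : Polynomial ℝ) (s : ℕ) : Polynomial ℝ :=
  ∏ j ∈ Finset.range s, (p - (j : Polynomial ℝ))

/-- in the (unique) expansion
`((x-1)^{m̲})^3 = a_{3,0,m}(x-1)^{m̲} + ∑_{l=1}^{⌊3m/(m+1)⌋} ∑_{r=0}^{m} a_{3,l,r}((x)^{(m+1)̲})^l (x+r-m-1)^{r̲}`,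
we have `a_{3,1,m-1} = (-1)^m m!` and `a_{3,1,m} = (-1)^{m-1} m! H_m`,
where `H_m = ∑_{i=1}^m 1/i`. -/
theorem stmt8 (m : ℕ) (hm : 1 ≤ m) (a0 : ℝ) (a : ℕ → ℕ → ℝ)
    (hexp : ffall (X - 1) m ^ 3 =
      C a0 * ffall (X - 1) m +
        ∑ l ∈ Finset.Icc 1 (m * 3 / (m + 1)), ∑ r ∈ Finset.range (m + 1),
          C (a l r) * ffall X (m + 1) ^ l *
            ffall (X + (r : Polynomial ℝ) - (m : Polynomial ℝ) - 1) r) :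
    a 1 (m - 1) = (-1 : ℝ) ^ m * Nat.factorial m ∧
    a 1 m = (-1 : ℝ) ^ (m - 1) * Nat.factorial m * ∑ i ∈ Finset.Icc 1 m, (1 : ℝ) / i := by
  classical
  open Finset in
  have hL1 : 1 ≤ m * 3 / (m + 1) := (Nat.le_div_iff_mul_le (by omega)).2 (by omega)
  set L := m * 3 / (m + 1) with hLdef
  set P : Polynomial ℝ := ffall (X - 1) m with hPdef
  set Q : Polynomial ℝ := ffall X (m + 1) with hQdef
  set R : ℕ → Polynomial ℝ :=
    fun r => ffall (X + (r : Polynomial ℝ) - (m : Polynomial ℝ) - 1) r with hRdef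
  set T : Polynomial ℝ :=
    ∑ l ∈ Finset.Icc 1 L, ∑ r ∈ Finset.range (m+1), C (a l r) * Q^(l-1) * R r with hTdef
  -- Step A : P^3 = C a0 * P + Q * T
  have hQT : P^3 = C a0 * P + Q * T := by
    rw [hexp]
    congr 1
    rw [hTdef, Finset.mul_sum]
    refine Finset.sum_congr rfl fun l hl => ?_
    rw [Finset.mul_sum]
    refine Finset.sum_congr rfl fun r _ => ?_
    have h1 : 1 ≤ l := (Finset.mem_Icc.1 hl).1
    have hQl : Q^l = Q * Q^(l-1) := by
      conv_lhs => rw [show l = 1 + (l-1) by omega]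
      rw [pow_add, pow_one]
    rw [hQl]; ring
  -- evaluation of the basis polynomials
  have hevP : ∀ t : ℝ, eval t P = ∏ j ∈ range m, (t - 1 - (j:ℝ)) := by
    intro t; rw [hPdef]; simp [ffall, eval_prod]
  have hevQ : ∀ t : ℝ, eval t Q = ∏ j ∈ range (m+1), (t - (j:ℝ)) := by
    intro t; rw [hQdef]; simp [ffall, eval_prod]
  have hevR : ∀ (t : ℝ) (r : ℕ), eval t (R r) = ∏ j ∈ range r, (t + r - m - 1 - (j:ℝ)) := by
    intro t r; rw [hRdef]; simp [ffall, eval_prod]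
  -- value of P at 0
  have hP0 : eval 0 P = (-1:ℝ)^m * m.factorial := by
    rw [hevP, ← prodP2 m]
    exact Finset.prod_congr rfl fun j _ => by ring
  have hfacne : (m.factorial : ℝ) ≠ 0 := Nat.cast_ne_zero.2 (Nat.factorial_ne_zero m)
  have hP0ne : ((-1:ℝ)^m * m.factorial) ≠ 0 :=
    mul_ne_zero (pow_ne_zero _ (by norm_num)) hfacne
  have hsq : ((-1:ℝ)^m)^2 = 1 := by
    rw [← pow_mul, mul_comm, pow_mul]; norm_num
  -- a0 = (m!)^2
  have ha0 : a0 = (m.factorial : ℝ)^2 := by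
    have h := congrArg (eval 0) hQT
    rw [eval_add, eval_mul, eval_mul, eval_pow, eval_C, hP0] at h
    have hQ0 : eval 0 Q = 0 := by
      rw [hevQ]
      exact Finset.prod_eq_zero (i := 0) (mem_range.2 (by omega)) (by simp)
    rw [hQ0, zero_mul, add_zero] at h
    have hc2 : ((-1:ℝ)^m * m.factorial)^2 = (m.factorial:ℝ)^2 := by
      rw [mul_pow, hsq, one_mul]
    refine mul_right_cancel₀ hP0ne ?_
    rw [← h]
    calc ((-1:ℝ)^m * m.factorial)^3
        = ((-1:ℝ)^m * m.factorial)^2 * ((-1:ℝ)^m * m.factorial) := by ring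
      _ = (m.factorial:ℝ)^2 * ((-1:ℝ)^m * m.factorial) := by rw [hc2]
  -- the system of equations
  set H : ℝ := ∑ i ∈ range m, (1:ℝ)/(i+1) with hHdef
  have hTval : ∀ n : ℕ, n ≤ m →
      ∑ r ∈ range (m+1), a 1 r * ((-1:ℝ)^r * r.factorial * (n.choose r))
        = (if n = m then -2*(m.factorial:ℝ)^2 * H
           else -(m.factorial:ℝ)^2 / ((m:ℝ) - n)) := by
    intro n hn
    have hQt : eval ((m:ℝ) - n) Q = 0 := by
      rw [hevQ]
      refine Finset.prod_eq_zero (i := m - n) (mem_range.2 (by omega)) ?_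
      rw [Nat.cast_sub hn]; ring
    have hTt : eval ((m:ℝ) - n) T
        = ∑ r ∈ range (m+1), a 1 r * ((-1:ℝ)^r * r.factorial * (n.choose r)) := by
      rw [hTdef, eval_finset_sum]
      rw [Finset.sum_eq_single 1]
      · rw [eval_finset_sum]
        refine Finset.sum_congr rfl fun r _ => ?_
        rw [eval_mul, eval_mul, eval_C, eval_pow, hQt]
        have hR : eval ((m:ℝ) - n) (R r) = (-1:ℝ)^r * r.factorial * (n.choose r) := by
          rw [hevR, ← prodP4 r n]
          refine Finset.prod_congr rfl fun j _ => ?_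
          ring
        rw [hR]; norm_num
      · intro l hl hne
        rw [eval_finset_sum]
        refine Finset.sum_eq_zero fun r _ => ?_
        rw [eval_mul, eval_mul, eval_pow, hQt]
        have h1 : 1 ≤ l := (Finset.mem_Icc.1 hl).1
        have h2 : l - 1 ≠ 0 := by
          rcases Nat.lt_or_ge l 2 with h | h
          · omega
          · omega
        rw [zero_pow h2]
        ring
      · intro habs
        exact absurd (Finset.mem_Icc.2 ⟨le_refl 1, hL1⟩) habs
    -- derivative equation evaluated at m - n
    have hD := congrArg (eval ((m:ℝ) - n)) (congrArg derivative hQT)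
    rw [derivative_pow, derivative_add, Polynomial.derivative_C_mul, derivative_mul] at hD
    simp only [eval_add, eval_mul, eval_pow, eval_C] at hD
    rw [hQt, zero_mul, add_zero, hTt] at hD
    norm_num at hD
    by_cases hnm : n = m
    · -- n = m, evaluation point is 0
      subst hnm
      rw [sub_self] at hD
      -- eval 0 (derivative P)
      have hdP0 : eval 0 (derivative P) = (-1:ℝ)^(n-1) * n.factorial * H := by
        rw [hPdef]
        show eval 0 (derivative (∏ j ∈ range n, ((X:Polynomial ℝ) - 1 - (j:Polynomial ℝ)))) = _
        rw [derivative_finset_prod, eval_finset_sum]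
        have hterm : ∀ i ∈ range n,
            eval 0 ((∏ j ∈ (range n).erase i, ((X:Polynomial ℝ) - 1 - (j:Polynomial ℝ)))
              * derivative ((X:Polynomial ℝ) - 1 - (i:Polynomial ℝ)))
            = (-1:ℝ)^(n-1) * n.factorial * (1/((i:ℝ)+1)) := by
          intro i hi
          rw [eval_mul]
          have hder : derivative ((X:Polynomial ℝ) - 1 - (i:Polynomial ℝ)) = 1 := by
            rw [derivative_sub, derivative_sub, derivative_X, derivative_one, derivative_natCast]
            ring
          rw [hder, eval_one, mul_one, eval_prod]
          have hpe : ∀ j ∈ (range n).erase i,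
              eval 0 ((X:Polynomial ℝ) - 1 - (j:Polynomial ℝ)) = -(1:ℝ) - j := by
            intro j _; simp
          rw [Finset.prod_congr rfl hpe]
          have hkey := Finset.prod_erase_mul (range n) (fun j => -(1:ℝ)-(j:ℝ)) hi
          rw [prodP2] at hkey
          have hine : -(1:ℝ) - i ≠ 0 := by
            have : (0:ℝ) ≤ i := Nat.cast_nonneg i
            intro hc; nlinarith
          have hpow : (-1:ℝ)^n = -(-1:ℝ)^(n-1) := by
            conv_lhs => rw [show n = (n-1)+1 by omega]
            rw [pow_succ]; ring
          have hi1 : ((i:ℝ)+1) ≠ 0 := by positivity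
          refine mul_right_cancel₀ hine ?_
          rw [hkey, hpow]
          field_simp
          ring
        rw [Finset.sum_congr rfl hterm, ← Finset.mul_sum, hHdef]
      -- eval 0 (derivative Q)
      have hdQ0 : eval 0 (derivative Q) = (-1:ℝ)^n * n.factorial := by
        rw [hQdef]
        show eval 0 (derivative (∏ j ∈ range (n+1), ((X:Polynomial ℝ) - (j:Polynomial ℝ)))) = _
        rw [eval_derivative_prod_root (range (n+1))
          (fun j => (X:Polynomial ℝ) - (j:Polynomial ℝ)) (i0 := 0) (mem_range.2 (by omega)) 0
          (by simp)]
        have hder : derivative ((X:Polynomial ℝ) - ((0:ℕ):Polynomial ℝ)) = 1 := by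
          rw [derivative_sub, derivative_X, derivative_natCast]; ring
        rw [hder, eval_one, one_mul]
        have hpe : ∀ j ∈ (range (n+1)).erase 0,
            eval 0 ((X:Polynomial ℝ) - (j:Polynomial ℝ)) = ((0:ℕ):ℝ) - j := by
          intro j _; simp
        rw [Finset.prod_congr rfl hpe, prodP3 (n+1) 0 (by omega)]
        simp
      rw [hP0, hdP0, hdQ0, ha0] at hD
      rw [if_pos rfl]
      have hpow : (-1:ℝ)^n = -(-1:ℝ)^(n-1) := by
        conv_lhs => rw [show n = (n-1)+1 by omega]
        rw [pow_succ]; ring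
      have hsq1 : ((-1:ℝ)^(n-1))^2 = 1 := by
        rw [← pow_mul, mul_comm, pow_mul]; norm_num
      refine mul_left_cancel₀ (show ((-1:ℝ)^n * (n.factorial:ℝ)) ≠ 0 from hP0ne) ?_
      rw [hpow] at hD ⊢
      linear_combination -hD + 3*(-1:ℝ)^(n-1)*(n.factorial:ℝ)^3*H*hsq1
    · -- n < m
      have hnlt : n < m := by omega
      rw [if_neg hnm]
      have hPt : eval ((m:ℝ) - n) P = 0 := by
        rw [hevP]
        refine Finset.prod_eq_zero (i := m - n - 1) (mem_range.2 (by omega)) ?_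
        rw [show (m-n-1:ℕ) = m-(n+1) by omega, Nat.cast_sub (by omega)]
        push_cast; ring
      have hcast1 : ((m-n-1:ℕ):ℝ) = (m:ℝ) - n - 1 := by
        rw [show (m-n-1:ℕ) = m-(n+1) by omega, Nat.cast_sub (by omega)]
        push_cast; ring
      have hcast2 : ((m-n:ℕ):ℝ) = (m:ℝ) - n := by
        rw [Nat.cast_sub hn]
      have hdPt : eval ((m:ℝ) - n) (derivative P)
          = (-1:ℝ)^n * ((m-n-1).factorial) * n.factorial := by
        rw [hPdef]
        show eval _ (derivative (∏ j ∈ range m, ((X:Polynomial ℝ) - 1 - (j:Polynomial ℝ)))) = _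
        rw [eval_derivative_prod_root (range m)
          (fun j => (X:Polynomial ℝ) - 1 - (j:Polynomial ℝ)) (i0 := m-n-1)
          (mem_range.2 (by omega)) _ (by simp [hcast1])]
        have hder : derivative ((X:Polynomial ℝ) - 1 - ((m-n-1:ℕ):Polynomial ℝ)) = 1 := by
          rw [derivative_sub, derivative_sub, derivative_X, derivative_one, derivative_natCast]
          ring
        rw [hder, eval_one, one_mul]
        have hpe : ∀ j ∈ (range m).erase (m-n-1),
            eval ((m:ℝ) - n) ((X:Polynomial ℝ) - 1 - (j:Polynomial ℝ))
              = ((m-n-1:ℕ):ℝ) - j := by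
          intro j _; simp [hcast1]
        rw [Finset.prod_congr rfl hpe, prodP3 m (m-n-1) (by omega),
          show m-1-(m-n-1) = n by omega]
      have hdQt : eval ((m:ℝ) - n) (derivative Q)
          = (-1:ℝ)^n * ((m-n).factorial) * n.factorial := by
        rw [hQdef]
        show eval _ (derivative (∏ j ∈ range (m+1), ((X:Polynomial ℝ) - (j:Polynomial ℝ)))) = _
        rw [eval_derivative_prod_root (range (m+1))
          (fun j => (X:Polynomial ℝ) - (j:Polynomial ℝ)) (i0 := m-n)
          (mem_range.2 (by omega)) _ (by simp [hcast2])]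
        have hder : derivative ((X:Polynomial ℝ) - ((m-n:ℕ):Polynomial ℝ)) = 1 := by
          rw [derivative_sub, derivative_X, derivative_natCast]; ring
        rw [hder, eval_one, one_mul]
        have hpe : ∀ j ∈ (range (m+1)).erase (m-n),
            eval ((m:ℝ) - n) ((X:Polynomial ℝ) - (j:Polynomial ℝ)) = ((m-n:ℕ):ℝ) - j := by
          intro j _; simp [hcast2]
        rw [Finset.prod_congr rfl hpe, prodP3 (m+1) (m-n) (by omega),
          show (m+1)-1-(m-n) = n by omega]
      rw [hPt, hdPt, hdQt, ha0] at hD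
      -- hD : 3 * 0^2 * ... = (m!)^2 * ((-1)^n (m-n-1)! n!) + ((-1)^n (m-n)! n!) * Σ
      have hfa : ((m-n).factorial:ℝ) = ((m:ℝ) - n) * ((m-n-1).factorial:ℝ) := by
        rw [show m-n = (m-n-1)+1 by omega, Nat.factorial_succ]
        push_cast
        rw [hcast1]
        ring
      have hkne : ((m:ℝ) - n) ≠ 0 := by
        rw [← hcast2]
        exact Nat.cast_ne_zero.2 (by omega)
      have hsg : ((-1:ℝ)^n) ≠ 0 := pow_ne_zero _ (by norm_num)
      have hf1 : ((m-n-1).factorial:ℝ) ≠ 0 := Nat.cast_ne_zero.2 (Nat.factorial_ne_zero _)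
      have hf2 : ((n).factorial:ℝ) ≠ 0 := Nat.cast_ne_zero.2 (Nat.factorial_ne_zero _)
      rw [hfa] at hD
      rw [eq_div_iff hkne]
      have hD2 : ((-1:ℝ)^n * ((m-n-1).factorial:ℝ) * (n.factorial:ℝ)) *
          ((m.factorial:ℝ)^2 + ((m:ℝ)-n) *
            (∑ r ∈ range (m+1), a 1 r * ((-1:ℝ)^r * r.factorial * (n.choose r)))) = 0 := by
        linear_combination -hD
      have hD3 := (mul_eq_zero.1 hD2).resolve_left
        (mul_ne_zero (mul_ne_zero hsg hf1) hf2)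
      linarith [hD3]
  -- triangular system in b
  set b : ℕ → ℝ := fun r => a 1 r * ((-1:ℝ)^r * r.factorial) with hbdef
  set F : ℕ → ℝ := fun n => if n = m then -2*(m.factorial:ℝ)^2 * H
      else -(m.factorial:ℝ)^2 / ((m:ℝ) - n) with hFdef
  have hsys : ∀ n, n ≤ m → ∑ r ∈ range (n+1), (n.choose r : ℝ) * b r = F n := by
    intro n hn
    have h1 := hTval n hn
    have h2 : ∑ r ∈ range (n+1), (fun r => a 1 r * ((-1:ℝ)^r * r.factorial * (n.choose r))) r
        = ∑ r ∈ range (m+1), (fun r => a 1 r * ((-1:ℝ)^r * r.factorial * (n.choose r))) r := by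
      refine Finset.sum_subset (Finset.range_subset_range.2 (by omega)) ?_
      intro x hx hx2
      simp only [mem_range] at hx hx2
      rw [Nat.choose_eq_zero_of_lt (by omega)]
      norm_num
    have h3 : ∑ r ∈ range (n+1), (n.choose r : ℝ) * b r
        = ∑ r ∈ range (n+1), a 1 r * ((-1:ℝ)^r * r.factorial * (n.choose r)) := by
      refine Finset.sum_congr rfl fun r _ => ?_
      rw [hbdef]; ring
    rw [h3, h2, h1, hFdef]
  have hm0 : (m:ℝ) ≠ 0 := Nat.cast_ne_zero.2 (by omega)
  have hfacm : (m.factorial:ℝ) = (m:ℝ) * ((m-1).factorial:ℝ) := by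
    conv_lhs => rw [show m = (m-1)+1 by omega, Nat.factorial_succ]
    push_cast
    rw [show ((m-1:ℕ):ℝ) + 1 = (m:ℝ) from by
      rw [Nat.cast_sub (by omega)]; push_cast; ring]
  have hsign : (-1:ℝ)^m * (-1:ℝ)^(m-1) = -1 := by
    obtain ⟨k, hk⟩ : ∃ k, m = k+1 := ⟨m-1, by omega⟩
    rw [hk, Nat.add_sub_cancel, pow_succ]
    have hsq1 : ((-1:ℝ)^k)^2 = 1 := by
      rw [← pow_mul, mul_comm, pow_mul]; norm_num
    linear_combination -hsq1
  -- first conclusion : a 1 (m-1)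
  have hbm1 := binom_inv (m-1) b F (fun n hn => hsys n (by omega))
  rw [show m-1+1 = m by omega] at hbm1
  have hb1val : b (m-1) = -(m.factorial:ℝ)^2 * (1/m) := by
    rw [hbm1]
    rw [← Finset.sum_range_reflect (fun n => (-1:ℝ)^(m-1-n) * ((m-1).choose n) * F n) m]
    have hterm : ∀ j ∈ range m,
        (-1:ℝ)^(m-1-(m-1-j)) * (((m-1).choose (m-1-j)):ℝ) * F (m-1-j)
          = -(m.factorial:ℝ)^2 * ((-1:ℝ)^j * ((m-1).choose j) / (j+1)) := by
      intro j hj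
      simp only [mem_range] at hj
      rw [show m-1-(m-1-j) = j by omega]
      rw [show (m-1-j) = (m-1)-j by rfl, Nat.choose_symm (by omega : j ≤ m-1)]
      rw [hFdef]
      simp only
      rw [if_neg (by omega : ¬ (m-1-j = m))]
      rw [show ((m-1-j:ℕ):ℝ) = (m:ℝ) - ((j:ℝ)+1) from by
        rw [show (m-1-j:ℕ) = m-(j+1) by omega, Nat.cast_sub (by omega)]; push_cast; ring]
      rw [show (m:ℝ) - ((m:ℝ) - ((j:ℝ)+1)) = (j:ℝ)+1 from by ring]
      ring
    rw [Finset.sum_congr rfl hterm, ← Finset.mul_sum, I2 m hm]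
  have hc1 : a 1 (m-1) = (-1:ℝ)^m * m.factorial := by
    have hb := hb1val
    rw [hbdef] at hb
    simp only at hb
    have hne : ((-1:ℝ)^(m-1) * ((m-1).factorial:ℝ)) ≠ 0 :=
      mul_ne_zero (pow_ne_zero _ (by norm_num)) (Nat.cast_ne_zero.2 (Nat.factorial_ne_zero _))
    refine mul_right_cancel₀ hne ?_
    rw [hb, hfacm]
    field_simp
    linear_combination -hsign
  -- second conclusion : a 1 m
  have hbm := binom_inv m b F hsys
  rw [Finset.sum_range_succ] at hbm
  have hbmval : b m = -(m.factorial:ℝ)^2 * H := by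
    rw [hbm]
    rw [← Finset.sum_range_reflect (fun n => (-1:ℝ)^(m-n) * ((m).choose n) * F n) m]
    have hterm : ∀ j ∈ range m,
        (-1:ℝ)^(m-(m-1-j)) * ((m.choose (m-1-j)):ℝ) * F (m-1-j)
          = (m.factorial:ℝ)^2 * ((-1:ℝ)^j * (m.choose (j+1)) / (j+1)) := by
      intro j hj
      simp only [mem_range] at hj
      rw [show m-(m-1-j) = j+1 by omega]
      rw [show (m-1-j) = m-(j+1) by omega, Nat.choose_symm (by omega : j+1 ≤ m)]
      rw [hFdef]
      simp only
      rw [if_neg (by omega : ¬ (m-(j+1) = m))]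
      rw [show ((m-(j+1):ℕ):ℝ) = (m:ℝ) - ((j:ℝ)+1) from by
        rw [Nat.cast_sub (by omega)]; push_cast; ring]
      rw [show (m:ℝ) - ((m:ℝ) - ((j:ℝ)+1)) = (j:ℝ)+1 from by ring]
      rw [pow_succ]
      ring
    rw [Finset.sum_congr rfl hterm, ← Finset.mul_sum, I1 m, ← hHdef, hFdef]
    simp only [Nat.sub_self, pow_zero, Nat.choose_self, Nat.cast_one, one_mul, if_pos]
    ring
  have hHicc : ∑ i ∈ Finset.Icc 1 m, (1:ℝ)/i = H := by
    rw [hHdef]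
    rw [show Finset.Icc 1 m = Finset.Ico 1 (m+1) from by rw [Finset.Ico_add_one_right_eq_Icc]]
    rw [Finset.sum_Ico_eq_sum_range]
    rw [show m+1-1 = m by omega]
    refine Finset.sum_congr rfl fun i _ => ?_
    push_cast
    rw [add_comm]
  have hc2 : a 1 m = (-1:ℝ)^(m-1) * m.factorial * ∑ i ∈ Finset.Icc 1 m, (1:ℝ)/i := by
    rw [hHicc]
    have hb := hbmval
    rw [hbdef] at hb
    simp only at hb
    refine mul_right_cancel₀ hP0ne ?_
    rw [hb]
    linear_combination (-(m.factorial:ℝ)^2 * H) * hsign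
  exact ⟨hc1, hc2⟩
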